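/- If C_in is a q-ary linear code of length n1, dimension k1, minimum distance d1 with locality r, and C_out is a linear code over F_{q^{k1}} of length n2, dimension k2, minimum distance d2, then the concatenated code (applying an F_q-linear isomorphism from F_{q^{k1}} to C_in to each coordinate of C_out) is a q-ary linear code of length n1*n2, dimension k1*k2, minimum distance at least d1*d2, and locality r. -/
import Mathlib


open Finset

/-- `R` (containing `i`) is a recovery set at coordinate `i` for the code `C`. -/
def IsRecoverySet {F : Type*} [Field F] {ι : Type*} [Fintype ι]
    (C : Submodule F (ι → F)) (i : ι) (R : Finset ι) : Prop :=
  i ∈ R ∧ ∀ u ∈ C, ∀ v ∈ C, (∀ j ∈ R, j ≠ i → u j = v j) → u i = v i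

/-- `C` has locality `r`: every coordinate has a recovery set of size at most `r+1`. -/
def HasLocality {F : Type*} [Field F] {ι : Type*} [Fintype ι]
    (C : Submodule F (ι → F)) (r : ℕ) : Prop :=
  ∀ i : ι, ∃ R : Finset ι, R.card ≤ r + 1 ∧ IsRecoverySet C i R

/-- Every nonzero codeword of `C` has Hamming weight at least `d`. -/
def DistAtLeast {F : Type*} [Field F] [DecidableEq F] {ι : Type*} [Fintype ι]
    (C : Submodule F (ι → F)) (d : ℕ) : Prop :=
  ∀ c ∈ C, c ≠ 0 → d ≤ hammingNorm c

/-- `C` has minimum distance exactly `d`. -/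
def IsMinDist {F : Type*} [Field F] [DecidableEq F] {ι : Type*} [Fintype ι]
    (C : Submodule F (ι → F)) (d : ℕ) : Prop :=
  (∃ c ∈ C, c ≠ 0 ∧ hammingNorm c = d) ∧ DistAtLeast C d

/-- The concatenation map: apply the `F`-linear isomorphism `φ : K ≃ C_in` to each
coordinate of a word in `K^{n₂}`, producing a word indexed by `Fin n₂ × Fin n₁`. -/
def concatMap {n1 n2 : ℕ} {F K : Type*} [Field F] [Field K] [Algebra F K]
    (Cin : Submodule F (Fin n1 → F)) (φ : K ≃ₗ[F] Cin) :
    (Fin n2 → K) →ₗ[F] (Fin n2 × Fin n1 → F) where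
  toFun w := fun p => (φ (w p.1) : Fin n1 → F) p.2
  map_add' u v := by funext p; simp
  map_smul' a u := by funext p; simp

/-- concatenating an `[n₁,k₁,d₁]_q` locally repairable code with locality `r`
(inner code) with an `[n₂,k₂,d₂]_{q^{k₁}}` linear code (outer code) yields a `q`-ary linear
code of length `n₁n₂`, dimension `k₁k₂`, minimum distance at least `d₁d₂` and locality `r`. -/
theorem concatenated_code {q n1 n2 k1 k2 d1 d2 r : ℕ}
    {F : Type*} [Field F] [Fintype F] [DecidableEq F] (hq : Fintype.card F = q)
    {K : Type*} [Field K] [Fintype K] [DecidableEq K] [Algebra F K] (hK : Fintype.card K = q ^ k1)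
    (Cin : Submodule F (Fin n1 → F)) (Cout : Submodule K (Fin n2 → K))
    (hk1 : Module.finrank F Cin = k1) (hd1 : IsMinDist Cin d1) (hloc : HasLocality Cin r)
    (hk2 : Module.finrank K Cout = k2) (hd2 : IsMinDist Cout d2)
    (φ : K ≃ₗ[F] Cin) :
    Fintype.card (Fin n2 × Fin n1) = n1 * n2 ∧
    Module.finrank F ((Cout.restrictScalars F).map (concatMap Cin φ)) = k1 * k2 ∧
    DistAtLeast ((Cout.restrictScalars F).map (concatMap Cin φ)) (d1 * d2) ∧
    HasLocality ((Cout.restrictScalars F).map (concatMap Cin φ)) r := by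

  have hinj : Function.Injective (concatMap (n2 := n2) Cin φ) := by
    rw [injective_iff_map_eq_zero]
    intro w hw
    funext j
    have h1 : (φ (w j) : Fin n1 → F) = 0 := funext fun i => congrFun hw (j, i)
    have h2 : φ (w j) = 0 := Subtype.ext h1
    exact (map_eq_zero_iff φ.toLinearMap φ.injective).mp h2
  refine ⟨by simp [Nat.mul_comm], ?_, ?_, ?_⟩
  · have e1 := (Submodule.equivMapOfInjective (concatMap Cin φ) hinj
      (Cout.restrictScalars F)).finrank_eq
    rw [← e1]
    have e2 : Module.finrank F (Cout.restrictScalars F) = Module.finrank F Cout := rfl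
    rw [e2]
    have e3 := Module.finrank_mul_finrank F K Cout
    have e4 : Module.finrank F K = k1 := by rw [φ.finrank_eq, hk1]
    rw [← e3, e4, hk2]
  · intro c hc hc0
    obtain ⟨w, hw, rfl⟩ := hc
    have hw0 : w ≠ 0 := by rintro rfl; simp at hc0
    have hwmem : w ∈ Cout := hw
    set S : Finset (Fin n2) := {j | w j ≠ 0} with hS
    have hScard : d2 ≤ S.card := hd2.2 w hwmem hw0
    set T : Finset (Fin n2 × Fin n1) :=
      S.biUnion (fun j => ({j} : Finset (Fin n2)) ×ˢ (Finset.univ.filter (fun i => (φ (w j) : Fin n1 → F) i ≠ 0))) with hT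
    have hTsub : T ⊆ (Finset.univ.filter (fun p => concatMap Cin φ w p ≠ 0)) := by
      intro p hp
      simp only [hT, Finset.mem_biUnion, Finset.mem_product, Finset.mem_singleton,
        Finset.mem_filter, Finset.mem_univ, true_and] at hp
      obtain ⟨j, hj, hpj, hpi⟩ := hp
      simp only [Finset.mem_filter, Finset.mem_univ, true_and]
      show (φ (w p.1) : Fin n1 → F) p.2 ≠ 0
      rw [hpj]; exact hpi
    have hTcard : T.card = ∑ j ∈ S, (Finset.univ.filter (fun i => (φ (w j) : Fin n1 → F) i ≠ 0)).card := by
      rw [hT, Finset.card_biUnion]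
      · refine Finset.sum_congr rfl fun j _ => ?_
        rw [Finset.card_product, Finset.card_singleton, one_mul]
      · intro a _ b _ hab
        simp only [Finset.disjoint_left]
        intro p hp hq
        simp only [Finset.mem_product, Finset.mem_singleton] at hp hq
        exact hab (hp.1 ▸ hq.1 ▸ rfl)
    have hinner : ∀ j ∈ S, d1 ≤ (Finset.univ.filter (fun i => (φ (w j) : Fin n1 → F) i ≠ 0)).card := by
      intro j hj
      have hwj : w j ≠ 0 := by simpa [hS] using hj
      have hne : (φ (w j) : Fin n1 → F) ≠ 0 := by
        intro h
        exact hwj ((map_eq_zero_iff φ.toLinearMap φ.injective).mp (Subtype.ext h))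
      exact hd1.2 _ (φ (w j)).2 hne
    calc d1 * d2 ≤ d1 * S.card := Nat.mul_le_mul_left d1 hScard
      _ = ∑ _j ∈ S, d1 := by rw [Finset.sum_const, smul_eq_mul, Nat.mul_comm]
      _ ≤ T.card := hTcard ▸ Finset.sum_le_sum hinner
      _ ≤ hammingNorm (concatMap Cin φ w) := Finset.card_le_card hTsub
  · rintro ⟨j, i⟩
    obtain ⟨R, hRcard, hiR, hRrec⟩ := hloc i
    refine ⟨({j} : Finset (Fin n2)) ×ˢ R, ?_, ?_, ?_⟩
    · rw [Finset.card_product, Finset.card_singleton, one_mul]; exact hRcard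
    · exact Finset.mem_product.mpr ⟨Finset.mem_singleton_self j, hiR⟩
    · rintro u ⟨w, hw, rfl⟩ v ⟨w', hw', rfl⟩ hagree
      show (φ (w j) : Fin n1 → F) i = (φ (w' j) : Fin n1 → F) i
      refine hRrec _ (φ (w j)).2 _ (φ (w' j)).2 fun l hl hli => ?_
      have := hagree (j, l) (Finset.mem_product.mpr ⟨Finset.mem_singleton_self j, hl⟩)
        (by simp [Prod.ext_iff, hli])
      exact this
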